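/- For t = (t₁₁,t₁₂,t₂₁,t₂₂) ∈ ℂ⁴ set D(t) := t₁₁t₂₂ − t₁₂t₂₁ and q(t) := i(1 + D(t)²) + (t₂₁ − t₁₂)(1 + D(t)), and define Φ = (Φ₁,Φ₂,Φ₃,Φ₄) : ℂ⁴ → ℂ⁴ by Φ₁(t) = i(1 + D(t)²)/q(t), Φ₂(t) = −(t₁₂ + t₂₁)(1 + D(t))/q(t), Φ₃(t) = −i(t₁₁D(t) + t₂₂)/q(t), Φ₄(t) = −i(t₂₂D(t) + t₁₁)/q(t). Then q(0) = i ≠ 0, Φ is holomorphic (ℂ-differentiable) on a neighborhood of 0, Φ(0) = (1,0,0,0), the derivative fderiv ℂ Φ 0 is a ℂ-linear automorphism of ℂ⁴, and consequently Φ is a local biholomorphism at 0: there exist open neighborhoods U of 0 and V of (1,0,0,0) such that Φ restricts to a bijection U → V whose inverse is holomorphic on V. -/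

import Mathlib

/-- `D(t) = t₁₁t₂₂ − t₁₂t₂₁` for `t = (t₁₁, t₁₂, t₂₁, t₂₂)`. -/
def Dq (t : ℂ × ℂ × ℂ × ℂ) : ℂ := t.1 * t.2.2.2 - t.2.1 * t.2.2.1

/-- `q(t) = i(1 + D(t)²) + (t₂₁ − t₁₂)(1 + D(t))`. -/
noncomputable def qf (t : ℂ × ℂ × ℂ × ℂ) : ℂ :=
  Complex.I * (1 + Dq t ^ 2) + (t.2.2.1 - t.2.1) * (1 + Dq t)

/-- The coordinate map `Φ = (z₁, z₂, z₃, z₄)` of Proposition 5.4. -/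
noncomputable def Φ (t : ℂ × ℂ × ℂ × ℂ) : ℂ × ℂ × ℂ × ℂ :=
  (Complex.I * (1 + Dq t ^ 2) / qf t,
   -((t.2.1 + t.2.2.1) * (1 + Dq t)) / qf t,
   -(Complex.I * (t.1 * Dq t + t.2.2.2)) / qf t,
   -(Complex.I * (t.2.2.2 * Dq t + t.1)) / qf t)

namespace Prop54Aux

abbrev E4 := ℂ × ℂ × ℂ × ℂ

noncomputable def p1 : E4 →L[ℂ] ℂ := ContinuousLinearMap.fst ℂ ℂ (ℂ × ℂ × ℂ)
noncomputable def p2 : E4 →L[ℂ] ℂ :=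
  (ContinuousLinearMap.fst ℂ ℂ (ℂ × ℂ)).comp (ContinuousLinearMap.snd ℂ ℂ (ℂ × ℂ × ℂ))
noncomputable def p3 : E4 →L[ℂ] ℂ :=
  (ContinuousLinearMap.fst ℂ ℂ ℂ).comp ((ContinuousLinearMap.snd ℂ ℂ (ℂ × ℂ)).comp
    (ContinuousLinearMap.snd ℂ ℂ (ℂ × ℂ × ℂ)))
noncomputable def p4 : E4 →L[ℂ] ℂ :=
  (ContinuousLinearMap.snd ℂ ℂ ℂ).comp ((ContinuousLinearMap.snd ℂ ℂ (ℂ × ℂ)).comp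
    (ContinuousLinearMap.snd ℂ ℂ (ℂ × ℂ × ℂ)))

@[simp] lemma p1_apply (h : E4) : p1 h = h.1 := rfl
@[simp] lemma p2_apply (h : E4) : p2 h = h.2.1 := rfl
@[simp] lemma p3_apply (h : E4) : p3 h = h.2.2.1 := rfl
@[simp] lemma p4_apply (h : E4) : p4 h = h.2.2.2 := rfl

noncomputable def f' : E4 →L[ℂ] E4 :=
  (Complex.I • (p3 - p2)).prod ((Complex.I • (p2 + p3)).prod ((-p4).prod (-p1)))

noncomputable def g' : E4 →L[ℂ] E4 :=
  (-p4).prod ((((-Complex.I/2) • (p2 - p1))).prod ((((-Complex.I/2) • (p1 + p2))).prod (-p3)))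

lemma left_inv : Function.LeftInverse g' f' := by
  intro h
  simp only [f', g', ContinuousLinearMap.prod_apply, ContinuousLinearMap.smul_apply,
    ContinuousLinearMap.sub_apply, ContinuousLinearMap.add_apply, ContinuousLinearMap.neg_apply,
    p1_apply, p2_apply, p3_apply, p4_apply, smul_eq_mul]
  refine Prod.ext ?_ (Prod.ext ?_ (Prod.ext ?_ ?_))
  all_goals simp
  all_goals ring_nf
  all_goals simp [Complex.I_sq]

lemma right_inv : Function.RightInverse g' f' := by
  intro h
  simp only [f', g', ContinuousLinearMap.prod_apply, ContinuousLinearMap.smul_apply,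
    ContinuousLinearMap.sub_apply, ContinuousLinearMap.add_apply, ContinuousLinearMap.neg_apply,
    p1_apply, p2_apply, p3_apply, p4_apply, smul_eq_mul]
  refine Prod.ext ?_ (Prod.ext ?_ (Prod.ext ?_ ?_))
  all_goals simp
  all_goals ring_nf
  all_goals simp [Complex.I_sq]

noncomputable def A : E4 ≃L[ℂ] E4 := ContinuousLinearEquiv.equivOfInverse f' g' left_inv right_inv

lemma qf_zero : qf 0 = Complex.I := by simp [qf, Dq]

lemma qf_zero_ne : qf 0 ≠ 0 := by rw [qf_zero]; exact Complex.I_ne_zero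

lemma hd1 (x : E4) : HasFDerivAt (fun t : E4 => t.1) p1 x := hasFDerivAt_fst
lemma hd2 (x : E4) : HasFDerivAt (fun t : E4 => t.2.1) p2 x :=
  hasFDerivAt_fst.comp x hasFDerivAt_snd
lemma hd3 (x : E4) : HasFDerivAt (fun t : E4 => t.2.2.1) p3 x :=
  hasFDerivAt_fst.comp x (hasFDerivAt_snd.comp x hasFDerivAt_snd)
lemma hd4 (x : E4) : HasFDerivAt (fun t : E4 => t.2.2.2) p4 x :=
  hasFDerivAt_snd.comp x (hasFDerivAt_snd.comp x hasFDerivAt_snd)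

lemma hDq : HasFDerivAt Dq (0 : E4 →L[ℂ] ℂ) 0 :=
  (((hd1 0).mul (hd4 0)).sub ((hd2 0).mul (hd3 0))).congr_fderiv (by
    refine ContinuousLinearMap.ext fun h => ?_
    simp)

lemma hqf : HasFDerivAt qf (p3 - p2) 0 := by
  unfold qf
  simp only [pow_two]
  exact ((((hDq.mul hDq).const_add 1).const_mul Complex.I).add
    (((hd3 0).sub (hd2 0)).mul (hDq.const_add 1))).congr_fderiv (by
      refine ContinuousLinearMap.ext fun h => ?_
      simp [Dq])

lemma hinv : HasFDerivAt (fun t : E4 => (qf t)⁻¹) ((-(qf 0 ^ 2)⁻¹) • (p3 - p2)) 0 :=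
  (hasDerivAt_inv qf_zero_ne).comp_hasFDerivAt 0 hqf

lemma hc1 : HasFDerivAt (fun t : E4 => Complex.I * (1 + Dq t ^ 2) / qf t)
    (Complex.I • (p3 - p2)) 0 := by
  simp only [div_eq_mul_inv, pow_two]
  exact (((((hDq.mul hDq).const_add 1).const_mul Complex.I)).mul hinv).congr_fderiv (by
    refine ContinuousLinearMap.ext fun h => ?_
    simp [qf_zero, Dq, Complex.inv_I]
    try ring_nf
    try simp [Complex.I_sq]
    try ring)

lemma hc2 : HasFDerivAt (fun t : E4 => -((t.2.1 + t.2.2.1) * (1 + Dq t)) / qf t)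
    (Complex.I • (p2 + p3)) 0 := by
  simp only [div_eq_mul_inv]
  exact (((((hd2 0).add (hd3 0)).mul (hDq.const_add 1)).neg).mul hinv).congr_fderiv (by
    refine ContinuousLinearMap.ext fun h => ?_
    simp [qf_zero, Dq, Complex.inv_I]
    try ring_nf
    try simp [Complex.I_sq]
    try ring)

lemma hc3 : HasFDerivAt (fun t : E4 => -(Complex.I * (t.1 * Dq t + t.2.2.2)) / qf t)
    (-p4) 0 := by
  simp only [div_eq_mul_inv]
  exact ((((((hd1 0).mul hDq).add (hd4 0)).const_mul Complex.I).neg).mul hinv).congr_fderiv (by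
    refine ContinuousLinearMap.ext fun h => ?_
    simp [qf_zero, Dq, Complex.inv_I]
    try ring_nf
    try simp [Complex.I_sq]
    try ring)

lemma hc4 : HasFDerivAt (fun t : E4 => -(Complex.I * (t.2.2.2 * Dq t + t.1)) / qf t)
    (-p1) 0 := by
  simp only [div_eq_mul_inv]
  exact ((((((hd4 0).mul hDq).add (hd1 0)).const_mul Complex.I).neg).mul hinv).congr_fderiv (by
    refine ContinuousLinearMap.ext fun h => ?_
    simp [qf_zero, Dq, Complex.inv_I]
    try ring_nf
    try simp [Complex.I_sq]
    try ring)

lemma hderiv : HasFDerivAt Φ (A : E4 →L[ℂ] E4) 0 :=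
  hc1.prodMk (hc2.prodMk (hc3.prodMk hc4))

lemma hcont : ContDiffAt ℂ 1 Φ 0 := by
  have hden : ContDiffAt ℂ 1 qf 0 := by unfold qf Dq; fun_prop
  have h1 : ContDiffAt ℂ 1 (fun t : E4 => Complex.I * (1 + Dq t ^ 2)) 0 := by
    unfold Dq; fun_prop
  have h2 : ContDiffAt ℂ 1 (fun t : E4 => -((t.2.1 + t.2.2.1) * (1 + Dq t))) 0 := by
    unfold Dq; fun_prop
  have h3 : ContDiffAt ℂ 1 (fun t : E4 => -(Complex.I * (t.1 * Dq t + t.2.2.2))) 0 := by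
    unfold Dq; fun_prop
  have h4 : ContDiffAt ℂ 1 (fun t : E4 => -(Complex.I * (t.2.2.2 * Dq t + t.1))) 0 := by
    unfold Dq; fun_prop
  exact ((h1.div hden qf_zero_ne).prodMk ((h2.div hden qf_zero_ne).prodMk
    ((h3.div hden qf_zero_ne).prodMk (h4.div hden qf_zero_ne))))

lemma hdiffAt {x : E4} (hx : qf x ≠ 0) : DifferentiableAt ℂ Φ x := by
  have hden : DifferentiableAt ℂ qf x := by unfold qf Dq; fun_prop
  have h1 : DifferentiableAt ℂ (fun t : E4 => Complex.I * (1 + Dq t ^ 2)) x := by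
    unfold Dq; fun_prop
  have h2 : DifferentiableAt ℂ (fun t : E4 => -((t.2.1 + t.2.2.1) * (1 + Dq t))) x := by
    unfold Dq; fun_prop
  have h3 : DifferentiableAt ℂ (fun t : E4 => -(Complex.I * (t.1 * Dq t + t.2.2.2))) x := by
    unfold Dq; fun_prop
  have h4 : DifferentiableAt ℂ (fun t : E4 => -(Complex.I * (t.2.2.2 * Dq t + t.1))) x := by
    unfold Dq; fun_prop
  have hinv' : DifferentiableAt ℂ (fun t : E4 => (qf t)⁻¹) x := hden.inv hx
  unfold Φ
  simp only [div_eq_mul_inv]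
  exact ((h1.mul hinv').prodMk ((h2.mul hinv').prodMk
    ((h3.mul hinv').prodMk (h4.mul hinv'))))

lemma qf_continuous : Continuous qf := by unfold qf Dq; fun_prop

lemma Phi_zero : Φ 0 = (1, 0, 0, 0) := by
  simp [Φ, qf, Dq, Complex.I_ne_zero]

end Prop54Aux

open Prop54Aux
theorem coordinates_on_Delta_gamma :
    -- q(0) = i ≠ 0
    qf 0 = Complex.I ∧ Complex.I ≠ 0 ∧
    -- Φ is holomorphic on a neighbourhood of 0
    (∃ U ∈ nhds (0 : ℂ × ℂ × ℂ × ℂ), DifferentiableOn ℂ Φ U) ∧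
    -- Φ(0) = (1,0,0,0)
    Φ 0 = (1, 0, 0, 0) ∧
    -- the derivative of Φ at 0 is a ℂ-linear automorphism of ℂ⁴
    (∃ A : (ℂ × ℂ × ℂ × ℂ) ≃L[ℂ] (ℂ × ℂ × ℂ × ℂ),
      (A : (ℂ × ℂ × ℂ × ℂ) →L[ℂ] (ℂ × ℂ × ℂ × ℂ)) = fderiv ℂ Φ 0) ∧
    -- Φ is a local biholomorphism at 0
    (∃ U V : Set (ℂ × ℂ × ℂ × ℂ), IsOpen U ∧ IsOpen V ∧
      (0 : ℂ × ℂ × ℂ × ℂ) ∈ U ∧ ((1, 0, 0, 0) : ℂ × ℂ × ℂ × ℂ) ∈ V ∧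
      Set.BijOn Φ U V ∧
      ∃ g : ℂ × ℂ × ℂ × ℂ → ℂ × ℂ × ℂ × ℂ, DifferentiableOn ℂ g V ∧
        (∀ x ∈ U, g (Φ x) = x) ∧ (∀ y ∈ V, Φ (g y) = y)) := by
  refine ⟨qf_zero, Complex.I_ne_zero, ?_, Phi_zero, ⟨A, hderiv.fderiv.symm⟩, ?_⟩
  · refine ⟨{t | qf t ≠ 0}, ?_, ?_⟩
    · exact (isOpen_compl_singleton.preimage qf_continuous).mem_nhds qf_zero_ne
    · exact fun x hx => (hdiffAt hx).differentiableWithinAt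
  · -- local inverse
    set e := hcont.toOpenPartialHomeomorph Φ hderiv one_ne_zero with he
    set g : E4 → E4 := hcont.localInverse hderiv one_ne_zero with hg
    have hginv : ContDiffAt ℂ 1 g (Φ 0) := hcont.to_localInverse hderiv one_ne_zero
    have hev : ∀ᶠ y in nhds (Φ 0), ContDiffAt ℂ 1 g y := hginv.eventually (by simp)
    obtain ⟨O, hOsub, hOopen, hO0⟩ := mem_nhds_iff.1 hev
    refine ⟨e.source ∩ Φ ⁻¹' (e.target ∩ O), e.target ∩ O, ?_, ?_, ?_, ?_, ?_, g, ?_, ?_, ?_⟩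
    · exact e.isOpen_inter_preimage (e.open_target.inter hOopen)
    · exact e.open_target.inter hOopen
    · exact ⟨hcont.mem_toOpenPartialHomeomorph_source hderiv one_ne_zero,
        hcont.image_mem_toOpenPartialHomeomorph_target hderiv one_ne_zero, hO0⟩
    · rw [← Phi_zero]
      exact ⟨hcont.image_mem_toOpenPartialHomeomorph_target hderiv one_ne_zero, hO0⟩
    · refine ⟨fun x hx => hx.2, fun x hx y hy hxy => e.injOn hx.1 hy.1 hxy, ?_⟩
      intro y hy
      have hΦ : Φ (e.symm y) = y := e.right_inv hy.1
      exact ⟨e.symm y, ⟨e.map_target hy.1, Set.mem_preimage.2 (by rw [hΦ]; exact hy)⟩, hΦ⟩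
    · intro y hy
      have hy' := hOsub hy.2
      simp only [Set.mem_setOf_eq] at hy'
      exact (hy'.differentiableAt one_ne_zero).differentiableWithinAt
    · intro x hx
      exact e.left_inv hx.1
    · intro y hy
      exact e.right_inv hy.1
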